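/- Let N ≥ 3 be a natural number and let 0 < α < N − 1. Define the vector field Z : ℝ^N ∖ {0} → ℝ^N by Z(x) = −(α‖x‖^{−α−2}/√(1 + α²‖x‖^{−2α−2})) x, the function v_α : (0,∞) → ℝ by v_α(r) = α r^{−α−1} (α² r^{−2α−2} − (α + 2 − N)/(N − 1)) / (1 + α² r^{−2α−2})^{3/2}, and f_α : ℝ^N ∖ {0} → ℝ by f_α(x) = ((N−1)/‖x‖) · ( v_α(‖x‖) + (‖x‖^{1−α} − ‖x‖)/(N−1) ). Then Z is differentiable at every x ≠ 0 and, for every x ∈ ℝ^N with x ≠ 0, (‖x‖^{−α} − 1) − div Z(x) = f_α(x), where div Z(x) = Σ_{i=1}^N ∂Z_i/∂x_i (x). In particular, u_α(x) = ‖x‖^{−α} − 1 is a classical solution of u − div(∇u/√(1 + |∇u|²)) = f_α on the punctured unit ball B₁(0) ∖ {0}. -/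

import Mathlib

open scoped BigOperators
open Real

noncomputable def Dg (α r : ℝ) : ℝ :=
  -(α * ((-α - 2) * r ^ (-α - 2 - 1) * (1 + α ^ 2 * r ^ (-2 * α - 2)) ^ (-(1:ℝ)/2) +
    r ^ (-α - 2) * (-(1:ℝ)/2 * (1 + α ^ 2 * r ^ (-2 * α - 2)) ^ (-(1:ℝ)/2 - 1) *
      (α ^ 2 * ((-2 * α - 2) * r ^ (-2 * α - 2 - 1))))))

lemma hasDerivAt_g (α : ℝ) {r : ℝ} (hr : 0 < r) :
    HasDerivAt (fun t : ℝ => -(α * t ^ (-α - 2) / Real.sqrt (1 + α ^ 2 * t ^ (-2 * α - 2))))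
      (Dg α r) r := by
  have hS : ∀ t : ℝ, 0 < t → 0 < 1 + α ^ 2 * t ^ (-2 * α - 2) := by
    intro t ht
    have := Real.rpow_pos_of_pos ht (-2 * α - 2)
    nlinarith [sq_nonneg α, mul_nonneg (sq_nonneg α) this.le]
  have h1 : HasDerivAt (fun t : ℝ => t ^ (-α - 2)) ((-α - 2) * r ^ (-α - 2 - 1)) r :=
    Real.hasDerivAt_rpow_const (Or.inl hr.ne')
  have h2 : HasDerivAt (fun t : ℝ => t ^ (-2 * α - 2)) ((-2 * α - 2) * r ^ (-2 * α - 2 - 1)) r :=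
    Real.hasDerivAt_rpow_const (Or.inl hr.ne')
  have h3 : HasDerivAt (fun t : ℝ => 1 + α ^ 2 * t ^ (-2 * α - 2))
      (α ^ 2 * ((-2 * α - 2) * r ^ (-2 * α - 2 - 1))) r := (h2.const_mul _).const_add 1
  have h4 := h3.rpow_const (p := -(1:ℝ)/2) (Or.inl (hS r hr).ne')
  have h6 := ((h1.mul h4).const_mul α).neg
  have h7 : HasDerivAt (fun x => -(α * (x ^ (-α - 2) * (1 + α ^ 2 * x ^ (-2 * α - 2)) ^ (-(1:ℝ)/2)))) (Dg α r) r := by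
    exact h6.congr_deriv (by unfold Dg; ring)
  refine h7.congr_of_eventuallyEq ?_
  · filter_upwards [eventually_gt_nhds hr] with t ht
    have hSt := hS t ht
    rw [Real.sqrt_eq_rpow, div_eq_mul_inv, ← Real.rpow_neg hSt.le]
    ring_nf

lemma key {N : ℕ} (hN : 3 ≤ N) {α r : ℝ} (hα0 : 0 < α) (hαN : α < (N:ℝ)-1) (hr : 0 < r) :
    (r ^ (-α) - 1) - ((N:ℝ) * (-(α * r ^ (-α - 2) / Real.sqrt (1 + α ^ 2 * r ^ (-2 * α - 2)))) + Dg α r * r)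
    = (((N:ℝ)-1)/r) * ((α * r ^ (-α - 1) * (α ^ 2 * r ^ (-2 * α - 2) - (α + 2 - N) / ((N:ℝ) - 1)) /
        (1 + α ^ 2 * r ^ (-2 * α - 2)) ^ ((3:ℝ)/2)) + (r ^ (1 - α) - r)/((N:ℝ)-1)) := by
  have hNm : (0:ℝ) < (N:ℝ) - 1 := lt_trans hα0 hαN
  have hQ0 : 0 < r ^ (-2 * α - 2) := Real.rpow_pos_of_pos hr _
  have hS : 0 < 1 + α ^ 2 * r ^ (-2 * α - 2) := by positivity
  have hT : 0 < Real.sqrt (1 + α ^ 2 * r ^ (-2 * α - 2)) := Real.sqrt_pos.mpr hS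
  have hT2 : Real.sqrt (1 + α ^ 2 * r ^ (-2 * α - 2)) ^ 2 = 1 + α ^ 2 * r ^ (-2 * α - 2) :=
    Real.sq_sqrt hS.le
  have e1 : r ^ (-α) = r ^ (-α - 2) * r ^ 2 := by
    rw [← Real.rpow_natCast r 2, ← Real.rpow_add hr]; congr 1; push_cast; ring
  have e2 : r ^ (1 - α) = r ^ (-α - 2) * r ^ 3 := by
    rw [← Real.rpow_natCast r 3, ← Real.rpow_add hr]; congr 1; push_cast; ring
  have e3 : r ^ (-α - 1) = r ^ (-α - 2) * r := by
    rw [show (-α - 1) = (-α - 2) + 1 by ring, Real.rpow_add hr, Real.rpow_one]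
  have e4 : r ^ (-α - 2 - 1) = r ^ (-α - 2) * r⁻¹ := by
    rw [show (-α - 2 - 1) = (-α - 2) + (-1) by ring, Real.rpow_add hr, Real.rpow_neg_one]
  have e5 : r ^ (-2 * α - 2 - 1) = r ^ (-2 * α - 2) * r⁻¹ := by
    rw [show (-2 * α - 2 - 1) = (-2 * α - 2) + (-1) by ring, Real.rpow_add hr,
      Real.rpow_neg_one]
  have e6 : (1 + α ^ 2 * r ^ (-2 * α - 2)) ^ (-(1:ℝ)/2)
      = (Real.sqrt (1 + α ^ 2 * r ^ (-2 * α - 2)))⁻¹ := by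
    rw [show -(1:ℝ)/2 = -(1/2) by ring, Real.rpow_neg hS.le, ← Real.sqrt_eq_rpow]
  have e8 : (1 + α ^ 2 * r ^ (-2 * α - 2)) ^ ((3:ℝ)/2)
      = (Real.sqrt (1 + α ^ 2 * r ^ (-2 * α - 2))) ^ 3 := by
    rw [show (3:ℝ)/2 = (1/2) * 3 by ring, Real.rpow_mul hS.le, ← Real.sqrt_eq_rpow,
      show ((3:ℝ)) = ((3:ℕ):ℝ) by norm_num, Real.rpow_natCast]
  have e7 : (1 + α ^ 2 * r ^ (-2 * α - 2)) ^ (-(1:ℝ)/2 - 1)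
      = ((Real.sqrt (1 + α ^ 2 * r ^ (-2 * α - 2))) ^ 3)⁻¹ := by
    rw [show -(1:ℝ)/2 - 1 = -((3:ℝ)/2) by ring, Real.rpow_neg hS.le, e8]
  unfold Dg
  rw [e1, e2, e3, e4, e5, e6, e7, e8]
  generalize hTg : Real.sqrt (1 + α ^ 2 * r ^ (-2 * α - 2)) = T at hT hT2 ⊢
  generalize hQg : r ^ (-2 * α - 2) = Q at hQ0 hT2 ⊢
  generalize hPg : r ^ (-α - 2) = P
  have hQe : Q = (T ^ 2 - 1) / α ^ 2 := by
    rw [hT2]; field_simp; ring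
  rw [hQe]
  field_simp
  ring


/-- Example 5.4: for `N ≥ 3` and `0 < α < N − 1`, the flux field
`Z(x) = −(α ‖x‖^{−α−2}/√(1 + α² ‖x‖^{−2α−2})) x` is differentiable away from the
origin and `(‖x‖^{−α} − 1) − div Z(x) = f_α(x)` for every `x ≠ 0`; i.e.
`u_α(x) = ‖x‖^{−α} − 1` is a classical solution of
`u − div(∇u/√(1+|∇u|²)) = f_α` on the punctured unit ball. -/
theorem unbounded_radial_solution {N : ℕ} (hN : 3 ≤ N) (α : ℝ) (hα0 : 0 < α)
    (hαN : α < (N : ℝ) - 1)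
    (Z : EuclideanSpace ℝ (Fin N) → EuclideanSpace ℝ (Fin N))
    (hZ : Z = fun x => (-(α * ‖x‖ ^ (-α - 2) /
      Real.sqrt (1 + α ^ 2 * ‖x‖ ^ (-2 * α - 2)))) • x)
    (v : ℝ → ℝ)
    (hv : v = fun r => α * r ^ (-α - 1) *
      (α ^ 2 * r ^ (-2 * α - 2) - (α + 2 - N) / ((N : ℝ) - 1)) /
      (1 + α ^ 2 * r ^ (-2 * α - 2)) ^ ((3 : ℝ) / 2))
    (fα : EuclideanSpace ℝ (Fin N) → ℝ)
    (hfα : fα = fun x => (((N : ℝ) - 1) / ‖x‖) *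
      (v ‖x‖ + (‖x‖ ^ (1 - α) - ‖x‖) / ((N : ℝ) - 1))) :
    ∀ x : EuclideanSpace ℝ (Fin N), x ≠ 0 →
      DifferentiableAt ℝ Z x ∧
      (‖x‖ ^ (-α) - 1) -
        (∑ i : Fin N, fderiv ℝ Z x (EuclideanSpace.single i 1) i) = fα x := by
  intro x hx
  have hr : 0 < ‖x‖ := norm_pos_iff.mpr hx
  set g : ℝ → ℝ := fun t : ℝ =>
    -(α * t ^ (-α - 2) / Real.sqrt (1 + α ^ 2 * t ^ (-2 * α - 2))) with hgdef
  -- derivative of y ↦ ⟪y, y⟫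
  have hF : HasFDerivAt (fun y : EuclideanSpace ℝ (Fin N) => (inner ℝ y y : ℝ))
      ((fderivInnerCLM ℝ (x, x)).comp
        ((ContinuousLinearMap.id ℝ _).prod (ContinuousLinearMap.id ℝ _))) x :=
    (hasFDerivAt_id x).inner ℝ (hasFDerivAt_id x)
  have hFx : (inner ℝ x x : ℝ) = ‖x‖ ^ 2 := real_inner_self_eq_norm_sq x
  -- derivative of t ↦ g (√t) at ‖x‖²
  have hg1 : HasDerivAt g (Dg α ‖x‖) (Real.sqrt (‖x‖ ^ 2)) := by
    rw [Real.sqrt_sq (norm_nonneg x)]; exact hasDerivAt_g α hr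
  have hsq : HasDerivAt Real.sqrt (1 / (2 * Real.sqrt (‖x‖ ^ 2))) (‖x‖ ^ 2) :=
    Real.hasDerivAt_sqrt (by positivity)
  have hG : HasDerivAt (fun t => g (Real.sqrt t))
      (Dg α ‖x‖ * (1 / (2 * ‖x‖))) ((inner ℝ x x : ℝ)) := by
    rw [hFx]
    have := hg1.comp (‖x‖ ^ 2) hsq
    rwa [Real.sqrt_sq (norm_nonneg x)] at this
  have hcomp : HasFDerivAt (fun y : EuclideanSpace ℝ (Fin N) => g ‖y‖)
      ((Dg α ‖x‖ * (1 / (2 * ‖x‖))) • ((fderivInnerCLM ℝ (x, x)).comp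
        ((ContinuousLinearMap.id ℝ _).prod (ContinuousLinearMap.id ℝ _)))) x := by
    have heq : (fun y : EuclideanSpace ℝ (Fin N) => g ‖y‖)
        = (fun t => g (Real.sqrt t)) ∘ (fun y : EuclideanSpace ℝ (Fin N) => (inner ℝ y y : ℝ)) := by
      funext y
      simp only [Function.comp_apply, real_inner_self_eq_norm_sq, Real.sqrt_sq (norm_nonneg y)]
    rw [heq]
    exact HasDerivAt.comp_hasFDerivAt (f := fun y : EuclideanSpace ℝ (Fin N) => (inner ℝ y y : ℝ)) x hG hF
  have hZd : HasFDerivAt Z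
      ((g ‖x‖) • (ContinuousLinearMap.id ℝ (EuclideanSpace ℝ (Fin N))) +
        ((Dg α ‖x‖ * (1 / (2 * ‖x‖))) • ((fderivInnerCLM ℝ (x, x)).comp
          ((ContinuousLinearMap.id ℝ _).prod (ContinuousLinearMap.id ℝ _)))).smulRight x) x := by
    rw [hZ]
    exact hcomp.smul (hasFDerivAt_id x)
  refine ⟨hZd.differentiableAt, ?_⟩
  have hsum : ∑ i : Fin N, fderiv ℝ Z x (EuclideanSpace.single i 1) i
      = (N : ℝ) * g ‖x‖ + Dg α ‖x‖ * ‖x‖ := by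
    rw [hZd.fderiv]
    have hterm : ∀ i : Fin N,
        ((g ‖x‖) • (ContinuousLinearMap.id ℝ (EuclideanSpace ℝ (Fin N))) +
          ((Dg α ‖x‖ * (1 / (2 * ‖x‖))) • ((fderivInnerCLM ℝ (x, x)).comp
            ((ContinuousLinearMap.id ℝ _).prod (ContinuousLinearMap.id ℝ _)))).smulRight x)
          (EuclideanSpace.single i 1) i
        = g ‖x‖ + Dg α ‖x‖ * (1 / (2 * ‖x‖)) * (2 * (x i * x i)) := by
      intro i
      simp [ContinuousLinearMap.smulRight_apply, fderivInnerCLM_apply,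
        EuclideanSpace.inner_single_right, EuclideanSpace.inner_single_left,
        real_inner_comm, PiLp.smul_apply, PiLp.add_apply, EuclideanSpace.single_apply,
        smul_eq_mul]
      ring
    rw [Finset.sum_congr rfl fun i _ => hterm i, Finset.sum_add_distrib,
      Finset.sum_const, Finset.card_univ, Fintype.card_fin]
    have hx2 : ∑ i : Fin N, x i * x i = ‖x‖ ^ 2 := by
      rw [← hFx, PiLp.inner_apply]
      simp [RCLike.inner_apply, conj_trivial, pow_two]
    have hc : ∑ i : Fin N, Dg α ‖x‖ * (1 / (2 * ‖x‖)) * (2 * (x i * x i))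
        = Dg α ‖x‖ * (1 / (2 * ‖x‖)) * (2 * ∑ i : Fin N, x i * x i) := by
      rw [Finset.mul_sum, Finset.mul_sum]
    rw [hc, hx2, nsmul_eq_mul]
    field_simp
  rw [hsum, hfα, hv]
  exact key hN hα0 hαN hr
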